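/- Let V, V′ be finite-dimensional real vector spaces and A: V → V′ linear. Say w = v⊕α ∈ V⊕V* and w′ = v′⊕α′ ∈ V′⊕(V′)* are A-related if v′ = A(v) and α = A*(α′). Then for the pullback A*: Λ(V′)* → ΛV* on contravariant spinors, ρ(w)(A*φ′) = A*(ρ(w′)φ′) holds for all A-related pairs (w,w′) and all φ′ ∈ Λ(V′)*, where ρ(v⊕α) = ι_v + α∧. Consequently, if φ′ is a pure spinor with A*φ′ ≠ 0, then A*φ′ is a pure spinor whose null space is {w ∈ V⊕V* : ∃ w′ ∈ N_{φ′}, w ∼_A w′}. -/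

import Mathlib

set_option synthInstance.maxHeartbeats 1000000
set_option maxHeartbeats 1000000

open Module

/-- The canonical split pairing on `𝕍 = V ⊕ V*`. -/
def vPair {V : Type*} [AddCommGroup V] [Module ℝ V]
    (p q : V × Module.Dual ℝ V) : ℝ :=
  p.2 q.1 + q.2 p.1

/-- The orthogonal complement of a set in `𝕍 = V ⊕ V*` for the canonical pairing. -/
def vPerp {V : Type*} [AddCommGroup V] [Module ℝ V]
    (S : Set (V × Module.Dual ℝ V)) : Set (V × Module.Dual ℝ V) :=
  {w | ∀ e ∈ S, vPair w e = 0}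

/-- The contravariant spinor action of `𝕍 = V ⊕ V*` on `ΛV*`:
`ρ(v ⊕ α)φ = α ∧ φ + ι_v φ`. -/
noncomputable def rho {V : Type*} [AddCommGroup V] [Module ℝ V]
    (w : V × Module.Dual ℝ V) (φ : ExteriorAlgebra ℝ (Module.Dual ℝ V)) :
    ExteriorAlgebra ℝ (Module.Dual ℝ V) :=
  ExteriorAlgebra.ι ℝ w.2 * φ +
    CliffordAlgebra.contractLeft (Module.Dual.eval ℝ V w.1) φ

/-- The null space `N_φ = {w ∈ 𝕍 : ρ(w)φ = 0}` of a spinor `φ ∈ ΛV*`. -/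
def nullSet {V : Type*} [AddCommGroup V] [Module ℝ V]
    (φ : ExteriorAlgebra ℝ (Module.Dual ℝ V)) : Set (V × Module.Dual ℝ V) :=
  {w | rho w φ = 0}

/-- `w ∈ V⊕V*` and `w' ∈ V'⊕V'*` are `A`-related if `v' = A v` and `α = A*(α')`. -/
def ARel {V V' : Type*} [AddCommGroup V] [Module ℝ V] [AddCommGroup V'] [Module ℝ V']
    (A : V →ₗ[ℝ] V') (w : V × Module.Dual ℝ V) (w' : V' × Module.Dual ℝ V') : Prop :=
  w'.1 = A w.1 ∧ w.2 = A.dualMap w'.2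


namespace Stmt18Aux

variable {V : Type*} [AddCommGroup V] [Module ℝ V]

lemma vPair_comm (p q : V × Module.Dual ℝ V) : vPair p q = vPair q p := by
  simp [vPair]; ring

/-- The split pairing as a bilinear form. -/
noncomputable def splitForm (V : Type*) [AddCommGroup V] [Module ℝ V] :
    LinearMap.BilinForm ℝ (V × Module.Dual ℝ V) :=
  LinearMap.mk₂ ℝ (fun p q => vPair p q)
    (fun p p' q => by simp [vPair]; ring)
    (fun c p q => by simp [vPair]; ring)
    (fun p q q' => by simp [vPair]; ring)
    (fun c p q => by simp [vPair]; ring)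

@[simp] lemma splitForm_apply (p q : V × Module.Dual ℝ V) : splitForm V p q = vPair p q := rfl

lemma splitForm_isRefl : (splitForm V).IsRefl := by
  intro p q h
  simpa [vPair_comm q p] using h

lemma splitForm_nondeg [FiniteDimensional ℝ V] : (splitForm V).Nondegenerate := by
  suffices hL : LinearMap.SeparatingLeft (splitForm V) from
    ⟨hL, fun q hq => hL q (fun p => by rw [splitForm_apply, vPair_comm]; exact hq p)⟩
  intro p hp
  have h1 : p.2 = 0 := by
    ext x
    simpa [vPair] using hp (x, 0)
  have h2 : p.1 = 0 := by
    rw [← Module.forall_dual_apply_eq_zero_iff ℝ p.1]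
    intro β
    simpa [vPair, h1] using hp (0, β)
  exact Prod.ext h2 h1

lemma rho_zero_left (φ : ExteriorAlgebra ℝ (Module.Dual ℝ V)) :
    rho (0 : V × Module.Dual ℝ V) φ = 0 := by
  simp [rho]

lemma rho_add_left (w u : V × Module.Dual ℝ V) (φ : ExteriorAlgebra ℝ (Module.Dual ℝ V)) :
    rho (w + u) φ = rho w φ + rho u φ := by
  simp only [rho, Prod.fst_add, Prod.snd_add, map_add, add_mul, LinearMap.add_apply]
  abel

lemma rho_smul_left (c : ℝ) (w : V × Module.Dual ℝ V) (φ : ExteriorAlgebra ℝ (Module.Dual ℝ V)) :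
    rho (c • w) φ = c • rho w φ := by
  simp only [rho, Prod.smul_fst, Prod.smul_snd, map_smul, smul_mul_assoc, LinearMap.smul_apply,
    smul_add]

lemma rho_zero_right (w : V × Module.Dual ℝ V) : rho w (0 : ExteriorAlgebra ℝ (Module.Dual ℝ V)) = 0 := by
  simp [rho]

/-- The null set of a spinor is a submodule. -/
noncomputable def nullSubmodule (φ : ExteriorAlgebra ℝ (Module.Dual ℝ V)) :
    Submodule ℝ (V × Module.Dual ℝ V) where
  carrier := nullSet φ
  add_mem' := by
    intro a b ha hb
    have ha' : rho a φ = 0 := ha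
    have hb' : rho b φ = 0 := hb
    show rho (a + b) φ = 0
    rw [rho_add_left, ha', hb', add_zero]
  zero_mem' := rho_zero_left φ
  smul_mem' := by
    intro c a ha
    have ha' : rho a φ = 0 := ha
    show rho (c • a) φ = 0
    rw [rho_smul_left, ha', smul_zero]

@[simp] lemma mem_nullSubmodule_iff {φ : ExteriorAlgebra ℝ (Module.Dual ℝ V)}
    {w : V × Module.Dual ℝ V} : w ∈ nullSubmodule φ ↔ rho w φ = 0 := Iff.rfl

lemma vPerp_coe (W : Submodule ℝ (V × Module.Dual ℝ V)) :
    vPerp (W : Set _) = (((splitForm V).orthogonal W : Submodule ℝ (V × Module.Dual ℝ V)) : Set (V × Module.Dual ℝ V)) := by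
  ext w
  constructor
  · intro h n hn
    have := h n hn
    rw [splitForm_apply, vPair_comm]
    exact this
  · intro h e he
    have := h e he
    rw [splitForm_apply] at this
    rw [vPair_comm]
    exact this

end Stmt18Aux
set_option synthInstance.maxHeartbeats 1000000
set_option maxHeartbeats 1000000
open Module
section
variable {V V' : Type*} [AddCommGroup V] [Module ℝ V] [AddCommGroup V'] [Module ℝ V']

lemma contract_map (f : Module.Dual ℝ V' →ₗ[ℝ] Module.Dual ℝ V)
    (d : Module.Dual ℝ (Module.Dual ℝ V))
    (x : ExteriorAlgebra ℝ (Module.Dual ℝ V')) :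
    CliffordAlgebra.contractLeft d (ExteriorAlgebra.map f x) =
      ExteriorAlgebra.map f (CliffordAlgebra.contractLeft (d.comp f) x) := by
  induction x using CliffordAlgebra.left_induction with
  | algebraMap r =>
      simp [CliffordAlgebra.contractLeft_algebraMap]
  | add x y hx hy =>
      simp only [map_add, hx, hy]
  | ι_mul x m hx =>
      rw [map_mul, ExteriorAlgebra.map_apply_ι, CliffordAlgebra.contractLeft_ι_mul,
        CliffordAlgebra.contractLeft_ι_mul, hx, map_sub, map_smul, map_mul,
        ExteriorAlgebra.map_apply_ι]
      simp

lemma ι_mul_ι_mul_swap (α β : Module.Dual ℝ V) (φ : ExteriorAlgebra ℝ (Module.Dual ℝ V)) :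
    ExteriorAlgebra.ι ℝ α * (ExteriorAlgebra.ι ℝ β * φ) =
      -(ExteriorAlgebra.ι ℝ β * (ExteriorAlgebra.ι ℝ α * φ)) := by
  rw [← mul_assoc, ← mul_assoc, ← neg_mul]
  congr 1
  exact eq_neg_of_add_eq_zero_left (ExteriorAlgebra.ι_add_mul_swap α β)

lemma rho_rho (w e : V × Module.Dual ℝ V) (φ : ExteriorAlgebra ℝ (Module.Dual ℝ V)) :
    rho w (rho e φ) + rho e (rho w φ) = vPair w e • φ := by
  obtain ⟨v, α⟩ := w
  obtain ⟨u, β⟩ := e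
  simp only [rho, vPair, mul_add, map_add, CliffordAlgebra.contractLeft_ι_mul,
    Module.Dual.eval_apply]
  rw [ι_mul_ι_mul_swap, add_smul,
    CliffordAlgebra.contractLeft_comm (Module.Dual.eval ℝ V v) (Module.Dual.eval ℝ V u) φ]
  abel
end
section
open Module Stmt18Aux
variable {V V' : Type*} [AddCommGroup V] [Module ℝ V] [AddCommGroup V'] [Module ℝ V']

lemma nullSet_subset_vPerp {φ : ExteriorAlgebra ℝ (Module.Dual ℝ V)} (hφ : φ ≠ 0) :
    nullSet φ ⊆ vPerp (nullSet φ) := by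
  intro w hw e he
  have hw' : rho w φ = 0 := hw
  have he' : rho e φ = 0 := he
  have h := rho_rho w e φ
  rw [he', hw', rho_zero_right, rho_zero_right, add_zero] at h
  rcases smul_eq_zero.mp h.symm with h0 | h0
  · exact h0
  · exact absurd h0 hφ

lemma intertwine (A : V →ₗ[ℝ] V') :
    ∀ (w : V × Module.Dual ℝ V) (w' : V' × Module.Dual ℝ V'), ARel A w w' →
      ∀ φ' : ExteriorAlgebra ℝ (Module.Dual ℝ V'),
        rho w (ExteriorAlgebra.map (A.dualMap) φ') =
          ExteriorAlgebra.map (A.dualMap) (rho w' φ') := by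
  rintro ⟨v, α⟩ ⟨v', α'⟩ ⟨h1, h2⟩ φ'
  dsimp only at h1 h2
  subst h1
  subst h2
  have key : (Module.Dual.eval ℝ V v).comp A.dualMap = Module.Dual.eval ℝ V' (A v) := by
    ext β
    simp
  simp only [rho]
  rw [map_add (ExteriorAlgebra.map A.dualMap), map_mul, ExteriorAlgebra.map_apply_ι,
    contract_map A.dualMap, key]

lemma finrank_map_add_inf_ker {M N : Type*} [AddCommGroup M] [Module ℝ M]
    [FiniteDimensional ℝ M] [AddCommGroup N] [Module ℝ N]
    (f : M →ₗ[ℝ] N) (W : Submodule ℝ M) :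
    finrank ℝ (W.map f) + finrank ℝ (LinearMap.ker f ⊓ W : Submodule ℝ M) = finrank ℝ W := by
  have h := LinearMap.finrank_range_add_finrank_ker (f.comp W.subtype)
  rw [LinearMap.range_comp, Submodule.range_subtype, LinearMap.ker_comp] at h
  have hker : (LinearMap.ker f).comap W.subtype
      = (LinearMap.ker f ⊓ W).comap W.subtype := by
    rw [Submodule.comap_inf, Submodule.comap_subtype_self, inf_top_eq]
  rw [hker, (Submodule.comapSubtypeEquivOfLe (inf_le_right :
    LinearMap.ker f ⊓ W ≤ W)).finrank_eq] at h
  exact h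
end
section
open Module Stmt18Aux

lemma orth_sup {M : Type*} [AddCommGroup M] [Module ℝ M] (B : LinearMap.BilinForm ℝ M)
    (X Y : Submodule ℝ M) :
    B.orthogonal (X ⊔ Y) = B.orthogonal X ⊓ B.orthogonal Y := by
  ext m
  simp only [Submodule.mem_inf, LinearMap.BilinForm.mem_orthogonal_iff]
  constructor
  · intro h
    exact ⟨fun n hn => h n (le_sup_left (a := X) (b := Y) hn),
      fun n hn => h n (le_sup_right (a := X) (b := Y) hn)⟩
  · rintro ⟨h1, h2⟩ n hn
    rcases Submodule.mem_sup.mp hn with ⟨x, hx, y, hy, rfl⟩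
    show B (x + y) m = 0
    rw [map_add, LinearMap.add_apply, h1 x hx, h2 y hy, add_zero]

lemma finrank_add_finrank_orth {M : Type*} [AddCommGroup M] [Module ℝ M]
    [FiniteDimensional ℝ M] {B : LinearMap.BilinForm ℝ M} (hB : B.Nondegenerate)
    (hB0 : B.IsRefl) (W : Submodule ℝ M) :
    finrank ℝ W + finrank ℝ (B.orthogonal W) = finrank ℝ M := by
  have h := LinearMap.BilinForm.finrank_add_finrank_orthogonal hB0 W
  rwa [LinearMap.BilinForm.orthogonal_top_eq_bot hB, inf_bot_eq, finrank_bot, add_zero] at h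
end
section
open Module Stmt18Aux

variable {V V' : Type*} [AddCommGroup V] [Module ℝ V] [FiniteDimensional ℝ V]
    [AddCommGroup V'] [Module ℝ V'] [FiniteDimensional ℝ V']

lemma part2 (A : V →ₗ[ℝ] V') (φ' : ExteriorAlgebra ℝ (Module.Dual ℝ V'))
    (hφ' : φ' ≠ 0) (hpure : nullSet φ' = vPerp (nullSet φ'))
    (hψne : ExteriorAlgebra.map (A.dualMap) φ' ≠ 0) :
    nullSet (ExteriorAlgebra.map (A.dualMap) φ') =
        {w : V × Module.Dual ℝ V | ∃ w' ∈ nullSet φ', ARel A w w'} ∧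
      nullSet (ExteriorAlgebra.map (A.dualMap) φ') =
        vPerp (nullSet (ExteriorAlgebra.map (A.dualMap) φ')) := by
  classical
  set ψ := ExteriorAlgebra.map (A.dualMap) φ' with hψdef
  set L' : Submodule ℝ (V' × Module.Dual ℝ V') := nullSubmodule φ' with hL'def
  set g : (V × Module.Dual ℝ V') →ₗ[ℝ] (V' × Module.Dual ℝ V') :=
    A.prodMap (LinearMap.id : Module.Dual ℝ V' →ₗ[ℝ] Module.Dual ℝ V') with hgdef
  set π : (V × Module.Dual ℝ V') →ₗ[ℝ] (V × Module.Dual ℝ V) :=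
    (LinearMap.id : V →ₗ[ℝ] V).prodMap A.dualMap with hπdef
  set K : Submodule ℝ (V × Module.Dual ℝ V') := L'.comap g with hKdef
  set L : Submodule ℝ (V × Module.Dual ℝ V) := K.map π with hLdef
  -- the set identity
  have hLset : (L : Set (V × Module.Dual ℝ V)) =
      {w : V × Module.Dual ℝ V | ∃ w' ∈ nullSet φ', ARel A w w'} := by
    ext w
    simp only [hLdef, SetLike.mem_coe, Submodule.mem_map, Submodule.mem_comap, Set.mem_setOf_eq]
    constructor
    · rintro ⟨⟨v, α'⟩, hx, rfl⟩
      exact ⟨(A v, α'), hx, rfl, rfl⟩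
    · rintro ⟨w', hw', h1, h2⟩
      refine ⟨(w.1, w'.2), ?_, ?_⟩
      · show g (w.1, w'.2) ∈ L'
        have hh : g (w.1, w'.2) = w' := Prod.ext h1.symm rfl
        rw [hh]
        exact hw'
      · exact Prod.ext rfl h2.symm
  -- orthogonality facts
  have hL'orth : (splitForm V').orthogonal L' = L' := by
    apply SetLike.ext'
    rw [← vPerp_coe]
    exact hpure.symm
  set C : Submodule ℝ (V' × Module.Dual ℝ V') :=
    (LinearMap.range A).prod (⊤ : Submodule ℝ (Module.Dual ℝ V')) with hCdef
  set Z : Submodule ℝ (V' × Module.Dual ℝ V') :=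
    (⊥ : Submodule ℝ V').prod (LinearMap.ker A.dualMap) with hZdef
  have horthC : (splitForm V').orthogonal C = Z := by
    ext p
    rw [LinearMap.BilinForm.mem_orthogonal_iff]
    constructor
    · intro h
      have hv : p.1 = 0 := by
        rw [← Module.forall_dual_apply_eq_zero_iff ℝ p.1]
        intro β
        have hm : ((0 : V'), β) ∈ C := by
          simp [hCdef, Submodule.mem_prod]
        have := h (0, β) hm
        rw [splitForm_apply] at this
        simpa [vPair] using this
      have hα : A.dualMap p.2 = 0 := by
        ext u
        have hm : ((A u : V'), (0 : Module.Dual ℝ V')) ∈ C := by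
          simp [hCdef, Submodule.mem_prod]
        have := h (A u, 0) hm
        rw [splitForm_apply] at this
        simpa [vPair] using this
      rw [hZdef, Submodule.mem_prod]
      exact ⟨by simpa using hv, by simpa [LinearMap.mem_ker] using hα⟩
    · intro hp n hn
      rw [hZdef, Submodule.mem_prod] at hp
      rw [hCdef, Submodule.mem_prod] at hn
      obtain ⟨x, hx⟩ := hn.1
      rw [splitForm_apply]
      have hp1 : p.1 = 0 := by simpa using hp.1
      have hp2 : A.dualMap p.2 = 0 := by simpa [LinearMap.mem_ker] using hp.2
      have : p.2 n.1 = 0 := by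
        rw [← hx]
        have := LinearMap.congr_fun hp2 x
        simpa using this
      simp [vPair, hp1, this]
  have horthZ : (splitForm V').orthogonal Z = C := by
    rw [← horthC, LinearMap.BilinForm.orthogonal_orthogonal splitForm_nondeg splitForm_isRefl]
  -- dimension bookkeeping
  have hdim' : finrank ℝ (V' × Module.Dual ℝ V') = finrank ℝ V' + finrank ℝ V' := by
    rw [Module.finrank_prod, Subspace.dual_finrank_eq]
  have hdim : finrank ℝ (V × Module.Dual ℝ V) = finrank ℝ V + finrank ℝ V := by
    rw [Module.finrank_prod, Subspace.dual_finrank_eq]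
  have hka : finrank ℝ (LinearMap.range A) + finrank ℝ (LinearMap.ker A) = finrank ℝ V :=
    LinearMap.finrank_range_add_finrank_ker A
  have hkz : finrank ℝ (LinearMap.range A) + finrank ℝ (LinearMap.ker A.dualMap)
      = finrank ℝ V' := by
    have h1 := LinearMap.finrank_range_add_finrank_ker A.dualMap
    rwa [LinearMap.finrank_range_dualMap_eq_finrank_range, Subspace.dual_finrank_eq] at h1
  have hZfin : finrank ℝ Z = finrank ℝ (LinearMap.ker A.dualMap) := by
    rw [hZdef, ← Submodule.map_inr]
    have h := finrank_map_add_inf_ker (LinearMap.inr ℝ V' (Module.Dual ℝ V'))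
      (LinearMap.ker A.dualMap)
    rwa [Submodule.ker_inr, bot_inf_eq, finrank_bot, add_zero] at h
  have hL'fin : finrank ℝ L' = finrank ℝ V' := by
    have h := finrank_add_finrank_orth splitForm_nondeg splitForm_isRefl L'
    rw [hL'orth, hdim'] at h
    omega
  have hsupinf := Submodule.finrank_sup_add_finrank_inf_eq L' Z
  have hLC : L' ⊓ C = (splitForm V').orthogonal (L' ⊔ Z) := by
    rw [orth_sup, hL'orth, horthZ]
  have hc : finrank ℝ (L' ⊔ Z : Submodule ℝ _) + finrank ℝ (L' ⊓ C : Submodule ℝ _)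
      = finrank ℝ V' + finrank ℝ V' := by
    have h := finrank_add_finrank_orth splitForm_nondeg splitForm_isRefl (L' ⊔ Z)
    rwa [← hLC, hdim'] at h
  -- computations with K
  have hgrange : LinearMap.range g = C := by
    ext p
    constructor
    · rintro ⟨⟨v, α⟩, rfl⟩
      rw [hCdef, Submodule.mem_prod]
      exact ⟨⟨v, rfl⟩, trivial⟩
    · intro hp
      rw [hCdef, Submodule.mem_prod] at hp
      obtain ⟨⟨v, hv⟩, -⟩ := hp
      exact ⟨(v, p.2), Prod.ext hv rfl⟩
  have hgker : LinearMap.ker g = (LinearMap.ker A).prod (⊥ : Submodule ℝ (Module.Dual ℝ V')) := by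
    rw [hgdef, LinearMap.ker_prodMap, LinearMap.ker_id]
  have hgkerfin : finrank ℝ (LinearMap.ker g) = finrank ℝ (LinearMap.ker A) := by
    rw [hgker, ← Submodule.map_inl]
    have h := finrank_map_add_inf_ker (LinearMap.inl ℝ V (Module.Dual ℝ V'))
      (LinearMap.ker A)
    rwa [Submodule.ker_inl, bot_inf_eq, finrank_bot, add_zero] at h
  have hkerle : LinearMap.ker g ≤ K := by
    intro x hx
    rw [LinearMap.mem_ker] at hx
    show g x ∈ L'
    rw [hx]
    exact L'.zero_mem
  have hKfin : finrank ℝ (L' ⊓ C : Submodule ℝ _) + finrank ℝ (LinearMap.ker A)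
      = finrank ℝ K := by
    have h := finrank_map_add_inf_ker g K
    rw [hKdef] at h
    rw [Submodule.map_comap_eq, hgrange, inf_comm C L'] at h
    rw [← hKdef] at h
    rw [inf_eq_left.mpr hkerle, hgkerfin] at h
    exact h
  -- computations with L
  have hπker : LinearMap.ker π
      = (⊥ : Submodule ℝ V).prod (LinearMap.ker A.dualMap) := by
    rw [hπdef, LinearMap.ker_prodMap, LinearMap.ker_id]
  have hWmap : Submodule.map g (LinearMap.ker π ⊓ K) = L' ⊓ Z := by
    ext p
    constructor
    · rintro ⟨⟨v, α⟩, hx, rfl⟩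
      obtain ⟨hker, hK⟩ := Submodule.mem_inf.mp hx
      have hker' : π (v, α) = 0 := hker
      rw [hπdef] at hker'
      have hv : v = 0 := congrArg Prod.fst hker'
      have hα : A.dualMap α = 0 := congrArg Prod.snd hker'
      refine Submodule.mem_inf.mpr ⟨hK, ?_⟩
      rw [hZdef, Submodule.mem_prod]
      constructor
      · show A v ∈ (⊥ : Submodule ℝ V')
        simp [hv]
      · show (α : Module.Dual ℝ V') ∈ LinearMap.ker A.dualMap
        simpa [LinearMap.mem_ker] using hα
    · intro hp
      rw [Submodule.mem_inf] at hp
      obtain ⟨hpL', hpZ⟩ := hp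
      rw [hZdef, Submodule.mem_prod] at hpZ
      have hp1 : p.1 = 0 := by simpa using hpZ.1
      have hp2 : A.dualMap p.2 = 0 := by simpa [LinearMap.mem_ker] using hpZ.2
      refine ⟨(0, p.2), Submodule.mem_inf.mpr ⟨?_, ?_⟩, ?_⟩
      · show π (0, p.2) = 0
        rw [hπdef]
        exact Prod.ext rfl (by simpa using hp2)
      · show g (0, p.2) ∈ L'
        have : g (0, p.2) = p := Prod.ext (by simp [hgdef, hp1]) rfl
        rw [this]
        exact hpL'
      · exact Prod.ext (by simp [hgdef, hp1]) rfl
  have hWker : LinearMap.ker g ⊓ (LinearMap.ker π ⊓ K) = ⊥ := by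
    rw [eq_bot_iff]
    rintro p ⟨hg', hrest⟩
    obtain ⟨hπm', -⟩ := Submodule.mem_inf.mp hrest
    have hg : g p = 0 := hg'
    have hπm : π p = 0 := hπm'
    rw [hgdef] at hg
    rw [hπdef] at hπm
    have h1 : p.1 = 0 := congrArg Prod.fst hπm
    have h2 : p.2 = 0 := congrArg Prod.snd hg
    rw [Submodule.mem_bot]
    exact Prod.ext h1 h2
  have hWfin : finrank ℝ (L' ⊓ Z : Submodule ℝ _)
      = finrank ℝ (LinearMap.ker π ⊓ K : Submodule ℝ _) := by
    have h := finrank_map_add_inf_ker g (LinearMap.ker π ⊓ K)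
    rwa [hWmap, hWker, finrank_bot, add_zero] at h
  have hLK : finrank ℝ L + finrank ℝ (LinearMap.ker π ⊓ K : Submodule ℝ _)
      = finrank ℝ K := finrank_map_add_inf_ker π K
  have hLfin : finrank ℝ L = finrank ℝ V := by omega
  -- final assembly
  have hLsubN : (L : Set (V × Module.Dual ℝ V)) ⊆ nullSet ψ := by
    intro w hw
    rw [hLset] at hw
    obtain ⟨w', hw', hrel⟩ := hw
    show rho w ψ = 0
    rw [hψdef, intertwine A w w' hrel φ', show rho w' φ' = 0 from hw', map_zero]
  have hNperp : nullSet ψ ⊆ vPerp (nullSet ψ) := nullSet_subset_vPerp hψne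
  have hperpmono : vPerp (nullSet ψ) ⊆ vPerp (L : Set (V × Module.Dual ℝ V)) :=
    fun x hx e he => hx e (hLsubN he)
  have hLle : L ≤ (splitForm V).orthogonal L := by
    intro x hx
    rw [LinearMap.BilinForm.mem_orthogonal_iff]
    intro n hn
    have := hNperp (hLsubN hx) n (hLsubN hn)
    rw [splitForm_apply, vPair_comm]
    exact this
  have horthLfin : finrank ℝ L + finrank ℝ ((splitForm V).orthogonal L)
      = finrank ℝ V + finrank ℝ V := by
    have h := finrank_add_finrank_orth splitForm_nondeg splitForm_isRefl L
    rwa [hdim] at h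
  have horthL : (splitForm V).orthogonal L = L :=
    (Submodule.eq_of_le_of_finrank_le hLle (by omega)).symm
  have hperpL : vPerp (L : Set (V × Module.Dual ℝ V)) = (L : Set (V × Module.Dual ℝ V)) := by
    rw [vPerp_coe, horthL]
  have hNL : nullSet ψ = (L : Set (V × Module.Dual ℝ V)) := by
    apply Set.Subset.antisymm
    · intro x hx
      have := hperpmono (hNperp hx)
      rwa [hperpL] at this
    · exact hLsubN
  constructor
  · rw [hNL, hLset]
  · apply Set.Subset.antisymm hNperp
    intro x hx
    have hx' : x ∈ vPerp (L : Set (V × Module.Dual ℝ V)) := fun e he => hx e (hLsubN he)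
    rw [hperpL] at hx'
    exact hLsubN hx'
end

/-- For a linear map `A : V → V'`, the pullback
`A* = Λ(A*) : Λ(V')* → ΛV*` intertwines the spinor actions along `A`-related elements:
`ρ(w)(A*φ') = A*(ρ(w')φ')` whenever `w ∼_A w'`.  Consequently, if `φ'` is a pure spinor
with `A*φ' ≠ 0`, then `A*φ'` is a pure spinor (its null space is Lagrangian) and its null
space is `{w : ∃ w' ∈ N_{φ'}, w ∼_A w'}`. -/
theorem stmt18 {V V' : Type*} [AddCommGroup V] [Module ℝ V] [FiniteDimensional ℝ V]
    [AddCommGroup V'] [Module ℝ V'] [FiniteDimensional ℝ V']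
    (A : V →ₗ[ℝ] V') :
    (∀ (w : V × Module.Dual ℝ V) (w' : V' × Module.Dual ℝ V'), ARel A w w' →
      ∀ φ' : ExteriorAlgebra ℝ (Module.Dual ℝ V'),
        rho w (ExteriorAlgebra.map (A.dualMap) φ') =
          ExteriorAlgebra.map (A.dualMap) (rho w' φ')) ∧
    (∀ φ' : ExteriorAlgebra ℝ (Module.Dual ℝ V'),
      φ' ≠ 0 → nullSet φ' = vPerp (nullSet φ') →
      ExteriorAlgebra.map (A.dualMap) φ' ≠ 0 →
      nullSet (ExteriorAlgebra.map (A.dualMap) φ') =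
          {w : V × Module.Dual ℝ V | ∃ w' ∈ nullSet φ', ARel A w w'} ∧
        nullSet (ExteriorAlgebra.map (A.dualMap) φ') =
          vPerp (nullSet (ExteriorAlgebra.map (A.dualMap) φ'))) := by
  refine ⟨intertwine A, ?_⟩
  intro φ' hφ' hpure hψne
  exact part2 A φ' hφ' hpure hψne
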